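/- Let P_0 = {H_i α_i}_{i=1}^s and P = {K_i β_i}_{i=1}^t be coset partitions of F_n (subgroups ordered by nonincreasing index) with ρ(P,P_0) < 2^{-(r+1)}, 2 ≤ r ≤ min(s,t)-1. If P_0 has multiplicity witnessed among its top r+1 indices (d_{H_{s-i}} = d_{H_{s-j}} for some 0 ≤ i < j ≤ r), then P has multiplicity. -/

import Mathlib

/-- The right coset `Hα = {hα : h ∈ H}` of a subgroup `H`. -/
def rcoset {G : Type*} [Group G] (H : Subgroup G) (α : G) : Set G := {g | g * α⁻¹ ∈ H}

/-- `{H_i α_i}` is a coset partition of `G`: every element lies in exactly one coset. -/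
def IsCosetPartition {G : Type*} [Group G] {s : ℕ} (H : Fin s → Subgroup G)
    (α : Fin s → G) : Prop :=
  ∀ g : G, ∃! i : Fin s, g ∈ rcoset (H i) (α i)

/-- A point of the space `Y`: a tuple `(H_s, ..., H_1)` of finite-index subgroups, ordered
by nonincreasing index, arising from some coset partition of the group. -/
def IsPartitionTuple {G : Type*} [Group G] (L : List (Subgroup G)) : Prop :=
  L.Pairwise (fun H K => K.index ≤ H.index) ∧
  (∀ H ∈ L, H.FiniteIndex ∧ 1 < H.index) ∧
  ∃ α : Fin L.length → G, IsCosetPartition (fun i => L.get i) α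

open Classical in
/-- First position (counting from 1) at which two lists disagree. -/
noncomputable def firstDiff {α : Type*} : List α → List α → ℕ
  | a :: P, b :: P' => if a = b then firstDiff P P' + 1 else 1
  | _, _ => 1

open Classical in
/-- The metric `ρ(P,P') = 2^{-k}`, `k` the first place of disagreement, `0` if equal. -/
noncomputable def pdist {α : Type*} (P P' : List α) : ℝ :=
  if P = P' then 0 else (2 : ℝ)⁻¹ ^ firstDiff P P'

/-- If `ρ(P,P₀) < 2^{-(r+1)}` and `P₀` has multiplicity witnessed among its top `r+1`
indices, then `P` has multiplicity. -/
theorem firstDiff_agree {α : Type*} : ∀ (P P' : List α) (k : ℕ),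
    k + 1 < firstDiff P P' → P[k]? = P'[k]?
  | a :: P, b :: P', k, h => by
    classical
    unfold firstDiff at h
    by_cases hab : a = b
    · rw [if_pos hab] at h
      cases k with
      | zero => simp [hab]
      | succ k =>
        simp only [List.getElem?_cons_succ]
        exact firstDiff_agree P P' k (by omega)
    · rw [if_neg hab] at h; omega
  | [], [], k, h => rfl
  | [], b :: P', k, h => by unfold firstDiff at h; omega
  | a :: P, [], k, h => by unfold firstDiff at h; omega

theorem multiplicity_stable (n : ℕ) (hn : 2 ≤ n)
    (P₀ P : List (Subgroup (FreeGroup (Fin n))))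
    (hP₀ : IsPartitionTuple P₀) (hP : IsPartitionTuple P)
    (r : ℕ) (hr : 2 ≤ r) (hrs : r + 1 ≤ P₀.length) (hrt : r + 1 ≤ P.length)
    (hclose : pdist P P₀ < (2 : ℝ)⁻¹ ^ (r + 1))
    (hmult : ∃ i j, i < j ∧ j ≤ r ∧
      (P₀[i]?.map Subgroup.index) = (P₀[j]?.map Subgroup.index)) :
    ∃ i j : Fin P.length, i ≠ j ∧ (P.get i).index = (P.get j).index := by
  obtain ⟨i, j, hij, hjr, hind⟩ := hmult
  have key : ∀ k : ℕ, k ≤ r → P[k]? = P₀[k]? := by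
    intro k hk
    by_cases hPP : P = P₀
    · rw [hPP]
    · have hne : pdist P P₀ = (2:ℝ)⁻¹ ^ firstDiff P P₀ := if_neg hPP
      rw [hne] at hclose
      have hlt : r + 1 < firstDiff P P₀ := by
        by_contra hcon
        push_neg at hcon
        have := pow_le_pow_of_le_one (by norm_num : (0:ℝ) ≤ 2⁻¹)
          (by norm_num : (2:ℝ)⁻¹ ≤ 1) hcon
        linarith
      exact firstDiff_agree P P₀ k (by omega)
  have hi : i < P.length := by omega
  have hj : j < P.length := by omega
  have e1 : P[i]? = P₀[i]? := key i (by omega)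
  have e2 : P[j]? = P₀[j]? := key j hjr
  refine ⟨⟨i, hi⟩, ⟨j, hj⟩, by simp [Fin.ext_iff]; omega, ?_⟩
  have h1 : P[i]? = some P[i] := List.getElem?_eq_getElem hi
  have h2 : P[j]? = some P[j] := List.getElem?_eq_getElem hj
  have : (P[i]?.map Subgroup.index) = (P[j]?.map Subgroup.index) := by
    rw [e1, e2, hind]
  rw [h1, h2] at this
  simpa using this
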